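/- Fix blocks B₁, …, B_D and let χ₊ : ℕ → Fin D be pseudo-ergodic, with semi-infinite Jacobi operators J₊(χ₊) and J₋(χ₊) built from the reflection-doubling of χ₊. Then for every block sequence χ' : ℤ → Fin D one has σ(J(χ')) ⊆ σ(J₊(χ₊)) and σ(J(χ')) ⊆ σ(J₋(χ₊)). -/

import Mathlib

/-- A semi-infinite sequence is pseudo-ergodic if it contains every finite word. -/
def PseudoErgodicN {D : ℕ} (χ : ℕ → Fin D) : Prop :=
  ∀ M : ℕ, 1 ≤ M → ∀ w : Fin M → Fin D, ∃ j : ℕ, ∀ k : Fin M, χ (j + (k : ℕ)) = w k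

noncomputable section

/-- A block: a nonempty finite list of triples `(v, ℓ, s)` of positive reals. -/
def Block : Type :=
  {L : List (ℝ × ℝ × ℝ) // L ≠ [] ∧ ∀ t ∈ L, 0 < t.1 ∧ 0 < t.2.1 ∧ 0 < t.2.2}

/-- The single-resonator propagation matrix `P^λ_{ℓ,s,v}`. -/
def propMat (lam ℓ s v : ℝ) : Matrix (Fin 2) (Fin 2) ℝ :=
  !![1 - s * ℓ * lam / v ^ 2, s; -(ℓ * lam / v ^ 2), 1]

/-- Propagation matrix of a resonator triple `(v, ℓ, s)`. -/
def propOf (lam : ℝ) (t : ℝ × ℝ × ℝ) : Matrix (Fin 2) (Fin 2) ℝ :=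
  propMat lam t.2.1 t.2.2 t.1

/-- The block propagation matrix `𝒫^λ_B = P^λ_{ℓ_L,s_L,v_L} ⋯ P^λ_{ℓ₁,s₁,v₁}`. -/
def blockMat (lam : ℝ) (Bd : Block) : Matrix (Fin 2) (Fin 2) ℝ :=
  ((Bd.1.map (propOf lam)).reverse).prod

/-- `data` (with block-start indices `st`) is the bi-infinite concatenation of the
blocks `B (χ j)`. -/
def IsConcat {D : ℕ} (B : Fin D → Block) (χ : ℤ → Fin D)
    (data : ℤ → ℝ × ℝ × ℝ) (st : ℤ → ℤ) : Prop :=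
  st 0 = 0 ∧ (∀ j : ℤ, st (j + 1) = st j + ((B (χ j)).1.length : ℤ)) ∧
    ∀ (j : ℤ) (k : ℕ) (hk : k < (B (χ j)).1.length),
      data (st j + (k : ℤ)) = (B (χ j)).1.get ⟨k, hk⟩

/-- `ℓ²(ℤ)`. -/
abbrev Hint := lp (fun _ : ℤ => ℝ) 2
/-- `ℓ²(ℤ≥0)`. -/
abbrev Hnat := lp (fun _ : ℕ => ℝ) 2
/-- `ℓ²(ℤ<0)`. -/
abbrev Hneg := lp (fun _ : {i : ℤ // i < 0} => ℝ) 2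

/-- The off-diagonal band `a(i) = −v_i v_{i+1}/(s_i √(ℓ_i ℓ_{i+1}))`,
with `data i = (v_i, ℓ_i, s_i)`. -/
def aSeq (data : ℤ → ℝ × ℝ × ℝ) (i : ℤ) : ℝ :=
  -((data i).1 * (data (i + 1)).1) /
    ((data i).2.2 * Real.sqrt ((data i).2.1 * (data (i + 1)).2.1))

/-- The diagonal band `b(i) = (v_i²/ℓ_i)(1/s_{i−1} + 1/s_i)`. -/
def bSeq (data : ℤ → ℝ × ℝ × ℝ) (i : ℤ) : ℝ :=
  ((data i).1 ^ 2 / (data i).2.1) * (1 / (data (i - 1)).2.2 + 1 / (data i).2.2)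

/-- `J` is the Jacobi operator on `ℓ²(ℤ)` with bands `a`, `b` built from `data`. -/
def IsJacobiOf (data : ℤ → ℝ × ℝ × ℝ) (J : Hint →L[ℝ] Hint) : Prop :=
  ∀ (x : Hint) (i : ℤ),
    J x i = aSeq data (i - 1) * x (i - 1) + bSeq data i * x i + aSeq data i * x (i + 1)

/-- `Jp` is the positive semi-infinite Jacobi operator with corner entry
`b(0) = v₀²/(ℓ₀s₀)`. -/
def IsJacobiPlusOf (data : ℤ → ℝ × ℝ × ℝ) (Jp : Hnat →L[ℝ] Hnat) : Prop :=
  (∀ x : Hnat,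
      Jp x 0 = (data 0).1 ^ 2 / ((data 0).2.1 * (data 0).2.2) * x 0 + aSeq data 0 * x 1) ∧
  (∀ (x : Hnat) (n : ℕ),
      Jp x (n + 1) = aSeq data (n : ℤ) * x n + bSeq data ((n : ℤ) + 1) * x (n + 1) +
        aSeq data ((n : ℤ) + 1) * x (n + 2))

/-- `Jm` is the negative semi-infinite Jacobi operator with corner entry
`b(−1) = v₋₁²/(ℓ₋₁s₋₂)`. -/
def IsJacobiMinusOf (data : ℤ → ℝ × ℝ × ℝ) (Jm : Hneg →L[ℝ] Hneg) : Prop :=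
  (∀ x : Hneg,
      Jm x ⟨-1, by norm_num⟩ =
        (data (-1)).1 ^ 2 / ((data (-1)).2.1 * (data (-2)).2.2) * x ⟨-1, by norm_num⟩ +
          aSeq data (-2) * x ⟨-2, by norm_num⟩) ∧
  (∀ (x : Hneg) (i : ℤ) (hi : i < -1),
      Jm x ⟨i, by omega⟩ =
        aSeq data (i - 1) * x ⟨i - 1, by omega⟩ + bSeq data i * x ⟨i, by omega⟩ +
          aSeq data i * x ⟨i + 1, by omega⟩)

/-- The reflection-doubling of a semi-infinite sequence. -/
def reflDouble {D : ℕ} (χp : ℕ → Fin D) : ℤ → Fin D :=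
  fun i => if 0 ≤ i then χp i.toNat else χp (-i - 1).toNat

open scoped RealInnerProductSpace

section AuxHilbert

lemma aux_isUnit {E : Type*} [NormedAddCommGroup E] [InnerProductSpace ℝ E] [CompleteSpace E]
    (T : E →L[ℝ] E) (hsym : ∀ x y : E, ⟪T x, y⟫ = ⟪x, T y⟫)
    {c : ℝ} (hc : 0 < c) (hbb : ∀ x, ‖x‖ ≤ c * ‖T x‖) : IsUnit T := by
  have hanti : AntilipschitzWith (⟨c, hc.le⟩ : NNReal) T :=
    AddMonoidHomClass.antilipschitz_of_bound T hbb
  have hinj : Function.Injective T := hanti.injective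
  have hcl : IsClosed (Set.range T) := hanti.isClosed_range T.uniformContinuous
  have hsetK : ((LinearMap.range (T : E →ₗ[ℝ] E) : Submodule ℝ E) : Set E) = Set.range T :=
    LinearMap.coe_range _
  haveI : CompleteSpace (LinearMap.range (T : E →ₗ[ℝ] E) : Submodule ℝ E) := by
    haveI hcl' : IsClosed ((LinearMap.range (T : E →ₗ[ℝ] E) : Submodule ℝ E) : Set E) := by
      rw [hsetK]; exact hcl
    exact IsClosed.completeSpace_coe
  have horth : (LinearMap.range (T : E →ₗ[ℝ] E))ᗮ = ⊥ := by
    rw [Submodule.eq_bot_iff]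
    intro y hy
    have h1 := (Submodule.mem_orthogonal _ y).mp hy (T (T y)) (LinearMap.mem_range.mpr ⟨T y, rfl⟩)
    rw [hsym] at h1
    have hTy0 : T y = 0 := inner_self_eq_zero.mp h1
    have h2 := hbb y
    rw [hTy0, norm_zero, mul_zero] at h2
    exact norm_le_zero_iff.mp h2
  have hrange : LinearMap.range (T : E →ₗ[ℝ] E) = ⊤ := Submodule.orthogonal_eq_bot_iff.mp horth
  exact ContinuousLinearMap.isUnit_iff_bijective.mpr ⟨hinj, LinearMap.range_eq_top.mp hrange⟩

end AuxHilbert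
section AuxLp

open scoped ENNReal RealInnerProductSpace

lemma aux_fsup_apply {ι : Type*} [DecidableEq ι] (F : Finset ι) (x : ι → ℝ) (j : ι) :
    (∑ i ∈ F, lp.single 2 i (x i) : lp (fun _ : ι => ℝ) 2) j = if j ∈ F then x j else 0 := by
  simp only [lp.coeFn_sum, Finset.sum_apply, lp.single_apply, Finset.sum_dite_eq, Pi.single_apply, Finset.sum_ite_eq]

lemma aux_norm_eq {ι κ : Type*} (f : lp (fun _ : ι => ℝ) 2) (g : lp (fun _ : κ => ℝ) 2)
    (e : ι → κ) (he : Function.Injective e)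
    (hfg : ∀ i, f i = g (e i)) (hg : ∀ j, j ∉ Set.range e → g j = 0) : ‖f‖ = ‖g‖ := by
  have h2 : 0 < (2 : ℝ≥0∞).toReal := by norm_num
  rw [lp.norm_eq_tsum_rpow h2 f, lp.norm_eq_tsum_rpow h2 g]
  congr 1
  have step1 : ∀ i, ‖f i‖ ^ (2 : ℝ≥0∞).toReal = ‖g (e i)‖ ^ (2 : ℝ≥0∞).toReal := by
    intro i; rw [hfg]
  refine (tsum_congr step1).trans (he.tsum_eq (f := fun j => ‖g j‖ ^ (2:ℝ≥0∞).toReal) ?_)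
  intro j hj
  by_contra hn
  exact (Function.mem_support.mp hj) (by rw [hg j hn, norm_zero, Real.zero_rpow h2.ne'])

lemma aux_dense_bound {ι : Type*} [DecidableEq ι] (T : lp (fun _ : ι => ℝ) 2 →L[ℝ] lp (fun _ : ι => ℝ) 2)
    {c : ℝ}
    (h : ∀ (x : lp (fun _ : ι => ℝ) 2) (F : Finset ι),
      ‖∑ i ∈ F, lp.single 2 i (x i)‖ ≤ c * ‖T (∑ i ∈ F, lp.single 2 i (x i))‖)
    (x : lp (fun _ : ι => ℝ) 2) : ‖x‖ ≤ c * ‖T x‖ := by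
  have hs : HasSum (fun i : ι => lp.single 2 i (x i)) x := lp.hasSum_single (by norm_num) x
  have h1 : Filter.Tendsto (fun F : Finset ι => ∑ i ∈ F, lp.single 2 i (x i))
      Filter.atTop (nhds x) := hs
  have h2 : Filter.Tendsto (fun F : Finset ι => ‖∑ i ∈ F, lp.single 2 i (x i)‖)
      Filter.atTop (nhds ‖x‖) := (continuous_norm.tendsto x).comp h1
  have h3 : Filter.Tendsto (fun F : Finset ι => c * ‖T (∑ i ∈ F, lp.single 2 i (x i))‖)
      Filter.atTop (nhds (c * ‖T x‖)) :=
    (((continuous_norm.tendsto (T x)).comp ((T.continuous.tendsto x).comp h1)).const_mul c)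
  exact le_of_tendsto_of_tendsto' h2 h3 (fun F => h x F)

lemma aux_resolvent_apply {ι : Type*} (T : lp (fun _ : ι => ℝ) 2 →L[ℝ] lp (fun _ : ι => ℝ) 2)
    (lam : ℝ) (x : lp (fun _ : ι => ℝ) 2) (i : ι) :
    ((algebraMap ℝ (lp (fun _ : ι => ℝ) 2 →L[ℝ] lp (fun _ : ι => ℝ) 2) lam - T) x) i
      = lam * x i - T x i := by
  have h0 : (algebraMap ℝ (lp (fun _ : ι => ℝ) 2 →L[ℝ] lp (fun _ : ι => ℝ) 2) lam) x
      = lam • x := by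
    rw [Algebra.algebraMap_eq_smul_one, ContinuousLinearMap.smul_apply,
      ContinuousLinearMap.one_apply]
  rw [ContinuousLinearMap.sub_apply, h0]
  have : ((lam • x - T x : lp (fun _ : ι => ℝ) 2) : ∀ _ : ι, ℝ) i = lam • x i - T x i := by
    rw [lp.coeFn_sub, Pi.sub_apply, lp.coeFn_smul, Pi.smul_apply]
  rw [this, smul_eq_mul]

lemma aux_resolvent_sym {ι : Type*} (T : lp (fun _ : ι => ℝ) 2 →L[ℝ] lp (fun _ : ι => ℝ) 2)
    (hsym : ∀ x y, ⟪T x, y⟫ = ⟪x, T y⟫) (lam : ℝ) :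
    ∀ x y, ⟪(algebraMap ℝ (lp (fun _ : ι => ℝ) 2 →L[ℝ] lp (fun _ : ι => ℝ) 2) lam - T) x, y⟫
      = ⟪x, (algebraMap ℝ (lp (fun _ : ι => ℝ) 2 →L[ℝ] lp (fun _ : ι => ℝ) 2) lam - T) y⟫ := by
  intro x y
  have h0 : ∀ z : lp (fun _ : ι => ℝ) 2,
      (algebraMap ℝ (lp (fun _ : ι => ℝ) 2 →L[ℝ] lp (fun _ : ι => ℝ) 2) lam - T) z
        = lam • z - T z := by
    intro z
    rw [ContinuousLinearMap.sub_apply, Algebra.algebraMap_eq_smul_one,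
      ContinuousLinearMap.smul_apply, ContinuousLinearMap.one_apply]
  rw [h0, h0, inner_sub_left, inner_sub_right, real_inner_smul_left, real_inner_smul_right,
    hsym]

end AuxLp
section AuxSym

open scoped RealInnerProductSpace ENNReal

lemma aux_shift_sum (K : ℕ) (g : ℤ → ℝ) (h1 : g (-(K:ℤ)-2) = 0) (h2 : g ((K:ℤ)+1) = 0) :
    ∑ i ∈ Finset.Icc (-(K:ℤ)-1) ((K:ℤ)+1), g (i - 1)
      = ∑ i ∈ Finset.Icc (-(K:ℤ)-1) ((K:ℤ)+1), g i := by
  have e1 : Finset.Icc (-(K:ℤ)-1) ((K:ℤ)+1)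
      = (Finset.Icc (-(K:ℤ)-2) ((K:ℤ))).map (addRightEmbedding 1) := by
    rw [Finset.map_add_right_Icc]; congr 1 <;> ring
  have e2 : ∑ i ∈ Finset.Icc (-(K:ℤ)-1) ((K:ℤ)+1), g (i - 1)
      = ∑ i ∈ Finset.Icc (-(K:ℤ)-2) ((K:ℤ)), g i := by
    rw [e1, Finset.sum_map]
    apply Finset.sum_congr rfl
    intro i _
    simp [addRightEmbedding_apply]
  rw [e2]
  have big : ∑ i ∈ Finset.Icc (-(K:ℤ)-2) (K:ℤ), g i
      = ∑ i ∈ Finset.Icc (-(K:ℤ)-2) ((K:ℤ)+1), g i := by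
    apply Finset.sum_subset (Finset.Icc_subset_Icc le_rfl (by omega))
    intro i hi hni
    simp only [Finset.mem_Icc] at hi hni
    have : i = (K:ℤ)+1 := by omega
    rw [this]; exact h2
  have big2 : ∑ i ∈ Finset.Icc (-(K:ℤ)-1) ((K:ℤ)+1), g i
      = ∑ i ∈ Finset.Icc (-(K:ℤ)-2) ((K:ℤ)+1), g i := by
    apply Finset.sum_subset (Finset.Icc_subset_Icc (by omega) le_rfl)
    intro i hi hni
    simp only [Finset.mem_Icc] at hi hni
    have : i = -(K:ℤ)-2 := by omega
    rw [this]; exact h1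
  rw [big, ← big2]

lemma aux_shift_sum' (K : ℕ) (g : ℤ → ℝ) (h1 : g (-(K:ℤ)-1) = 0) (h2 : g ((K:ℤ)+2) = 0) :
    ∑ i ∈ Finset.Icc (-(K:ℤ)-1) ((K:ℤ)+1), g (i + 1)
      = ∑ i ∈ Finset.Icc (-(K:ℤ)-1) ((K:ℤ)+1), g i := by
  have e1 : Finset.Icc (-(K:ℤ)-1) ((K:ℤ)+1)
      = (Finset.Icc (-(K:ℤ)) ((K:ℤ)+2)).map (addRightEmbedding (-1)) := by
    rw [Finset.map_add_right_Icc]; congr 1 <;> ring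
  have e2 : ∑ i ∈ Finset.Icc (-(K:ℤ)-1) ((K:ℤ)+1), g (i + 1)
      = ∑ i ∈ Finset.Icc (-(K:ℤ)) ((K:ℤ)+2), g i := by
    rw [e1, Finset.sum_map]
    apply Finset.sum_congr rfl
    intro i _
    simp [addRightEmbedding_apply]
  rw [e2]
  have big : ∑ i ∈ Finset.Icc (-(K:ℤ)) ((K:ℤ)+2), g i
      = ∑ i ∈ Finset.Icc (-(K:ℤ)-1) ((K:ℤ)+2), g i := by
    apply Finset.sum_subset (Finset.Icc_subset_Icc (by omega) le_rfl)
    intro i hi hni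
    simp only [Finset.mem_Icc] at hi hni
    have : i = -(K:ℤ)-1 := by omega
    rw [this]; exact h1
  have big2 : ∑ i ∈ Finset.Icc (-(K:ℤ)-1) ((K:ℤ)+1), g i
      = ∑ i ∈ Finset.Icc (-(K:ℤ)-1) ((K:ℤ)+2), g i := by
    apply Finset.sum_subset (Finset.Icc_subset_Icc le_rfl (by omega))
    intro i hi hni
    simp only [Finset.mem_Icc] at hi hni
    have : i = (K:ℤ)+2 := by omega
    rw [this]; exact h2
  rw [big, ← big2]

lemma aux_inner_tsum (f g : Hint) : ⟪f, g⟫ = ∑' i : ℤ, f i * g i := by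
  rw [lp.inner_eq_tsum]
  exact tsum_congr fun i => by
    simp [RCLike.inner_apply, starRingEnd_apply, star_trivial]; ring

lemma aux_sym_fin (data' : ℤ → ℝ × ℝ × ℝ) (J' : Hint →L[ℝ] Hint) (hJ' : IsJacobiOf data' J')
    (K : ℕ) (x y : Hint)
    (hx : ∀ q : ℤ, q < -(K:ℤ) ∨ (K:ℤ) < q → x q = 0)
    (hy : ∀ q : ℤ, q < -(K:ℤ) ∨ (K:ℤ) < q → y q = 0) :
    ⟪J' x, y⟫ = ⟪x, J' y⟫ := by
  set S : Finset ℤ := Finset.Icc (-(K:ℤ)-1) ((K:ℤ)+1) with hS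
  have hxS : ∀ q : ℤ, q ∉ S → x q = 0 := by
    intro q hq; simp only [hS, Finset.mem_Icc] at hq; exact hx q (by omega)
  have hyS : ∀ q : ℤ, q ∉ S → y q = 0 := by
    intro q hq; simp only [hS, Finset.mem_Icc] at hq; exact hy q (by omega)
  have hL : ⟪J' x, y⟫ = ∑ i ∈ S, (J' x) i * y i := by
    rw [aux_inner_tsum]
    exact tsum_eq_sum (fun i hi => by rw [hyS i hi, mul_zero])
  have hR : ⟪x, J' y⟫ = ∑ i ∈ S, x i * (J' y) i := by
    rw [aux_inner_tsum]
    exact tsum_eq_sum (fun i hi => by rw [hxS i hi, zero_mul])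
  rw [hL, hR]
  have expandL : ∀ i ∈ S, (J' x) i * y i
      = aSeq data' (i-1) * x (i-1) * y i + bSeq data' i * x i * y i
        + aSeq data' i * x (i+1) * y i := by
    intro i _; rw [hJ' x i]; ring
  have expandR : ∀ i ∈ S, x i * (J' y) i
      = aSeq data' (i-1) * x i * y (i-1) + bSeq data' i * x i * y i
        + aSeq data' i * x i * y (i+1) := by
    intro i _; rw [hJ' y i]; ring
  rw [Finset.sum_congr rfl expandL, Finset.sum_congr rfl expandR]
  rw [Finset.sum_add_distrib, Finset.sum_add_distrib, Finset.sum_add_distrib,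
    Finset.sum_add_distrib]
  have t1 : ∑ i ∈ S, aSeq data' (i-1) * x (i-1) * y i
      = ∑ i ∈ S, aSeq data' i * x i * y (i+1) := by
    have := aux_shift_sum K (fun i => aSeq data' i * x i * y (i+1)) ?_ ?_
    · rw [← this]
      apply Finset.sum_congr rfl
      intro i _
      rw [show i - 1 + 1 = i by ring]
    · have : x (-(K:ℤ)-2) = 0 := hx _ (by left; omega)
      simp [this]
    · have : x ((K:ℤ)+1) = 0 := hx _ (by right; omega)
      simp [this]
  have t3 : ∑ i ∈ S, aSeq data' i * x (i+1) * y i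
      = ∑ i ∈ S, aSeq data' (i-1) * x i * y (i-1) := by
    have := aux_shift_sum' K (fun i => aSeq data' (i-1) * x i * y (i-1)) ?_ ?_
    · rw [← this]
      apply Finset.sum_congr rfl
      intro i _
      have e : i + 1 - 1 = i := by ring
      rw [e]
    · have : x (-(K:ℤ)-1) = 0 := hx _ (by left; omega)
      simp [this]
    · have : x ((K:ℤ)+2) = 0 := hx _ (by right; omega)
      simp [this]
  rw [t1, t3]
  ring

lemma aux_sym (data' : ℤ → ℝ × ℝ × ℝ) (J' : Hint →L[ℝ] Hint) (hJ' : IsJacobiOf data' J') :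
    ∀ x y : Hint, ⟪J' x, y⟫ = ⟪x, J' y⟫ := by
  have hpart : ∀ (z : Hint) (F : Finset ℤ) (q : ℤ),
      (q < -((F.sup fun i => i.natAbs : ℕ):ℤ) ∨ ((F.sup fun i => i.natAbs : ℕ):ℤ) < q) →
      (∑ i ∈ F, lp.single 2 i (z i) : Hint) q = 0 := by
    intro z F q hq
    rw [aux_fsup_apply]
    have : q ∉ F := by
      intro hmem
      have h1 : q.natAbs ≤ F.sup fun i => i.natAbs := Finset.le_sup hmem
      omega
    simp [this]
  have hbig : ∀ (z w : Hint) (F G : Finset ℤ),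
      ⟪J' (∑ i ∈ F, lp.single 2 i (z i)), (∑ i ∈ G, lp.single 2 i (w i))⟫
        = ⟪(∑ i ∈ F, lp.single 2 i (z i)), J' (∑ i ∈ G, lp.single 2 i (w i))⟫ := by
    intro z w F G
    set K : ℕ := max (F.sup fun i => i.natAbs) (G.sup fun i => i.natAbs) with hK
    apply aux_sym_fin data' J' hJ' K
    · intro q hq
      apply hpart z F q
      omega
    · intro q hq
      apply hpart w G q
      omega
  intro x y
  have hstep : ∀ w : Hint, (∃ G : Finset ℤ, w = ∑ i ∈ G, lp.single 2 i (y i)) →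
      ⟪J' x, w⟫ = ⟪x, J' w⟫ := by
    rintro w ⟨G, rfl⟩
    have hs : HasSum (fun i : ℤ => lp.single 2 i (x i)) x := lp.hasSum_single (by norm_num) x
    have hcont : Continuous fun z : Hint =>
        (⟪J' z, ∑ i ∈ G, lp.single 2 i (y i)⟫ - ⟪z, J' (∑ i ∈ G, lp.single 2 i (y i))⟫ : ℝ) := by
      apply Continuous.sub
      · exact Continuous.inner (J'.continuous) continuous_const
      · exact Continuous.inner continuous_id continuous_const
    have hlim := (hcont.tendsto x).comp hs
    have hzero : (fun F : Finset ℤ =>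
        (⟪J' (∑ i ∈ F, lp.single 2 i (x i)), ∑ i ∈ G, lp.single 2 i (y i)⟫
          - ⟪(∑ i ∈ F, lp.single 2 i (x i)), J' (∑ i ∈ G, lp.single 2 i (y i))⟫ : ℝ))
        = fun _ => 0 := by
      funext F
      rw [hbig x y F G]
      ring
    have hlim' : Filter.Tendsto (fun F : Finset ℤ =>
        (⟪J' (∑ i ∈ F, lp.single 2 i (x i)), ∑ i ∈ G, lp.single 2 i (y i)⟫
          - ⟪(∑ i ∈ F, lp.single 2 i (x i)), J' (∑ i ∈ G, lp.single 2 i (y i))⟫ : ℝ))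
        Filter.atTop (nhds ((⟪J' x, ∑ i ∈ G, lp.single 2 i (y i)⟫
          - ⟪x, J' (∑ i ∈ G, lp.single 2 i (y i))⟫ : ℝ))) := hlim
    rw [hzero] at hlim'
    have := tendsto_nhds_unique hlim' tendsto_const_nhds
    linarith [this]
  have hs : HasSum (fun i : ℤ => lp.single 2 i (y i)) y := lp.hasSum_single (by norm_num) y
  have hcont : Continuous fun w : Hint => (⟪J' x, w⟫ - ⟪x, J' w⟫ : ℝ) := by
    apply Continuous.sub
    · exact Continuous.inner continuous_const continuous_id
    · exact Continuous.inner continuous_const J'.continuous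
  have hlim := (hcont.tendsto y).comp hs
  have hzero : (fun G : Finset ℤ =>
      (⟪J' x, ∑ i ∈ G, lp.single 2 i (y i)⟫ - ⟪x, J' (∑ i ∈ G, lp.single 2 i (y i))⟫ : ℝ))
      = fun _ => 0 := by
    funext G
    rw [hstep _ ⟨G, rfl⟩]
    ring
  have hlim' : Filter.Tendsto (fun G : Finset ℤ =>
      (⟪J' x, ∑ i ∈ G, lp.single 2 i (y i)⟫ - ⟪x, J' (∑ i ∈ G, lp.single 2 i (y i))⟫ : ℝ))
      Filter.atTop (nhds ((⟪J' x, y⟫ - ⟪x, J' y⟫ : ℝ))) := hlim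
  rw [hzero] at hlim'
  have := tendsto_nhds_unique hlim' tendsto_const_nhds
  linarith [this]

end AuxSym
section AuxConcat

lemma aux_st_le {D : ℕ} {B : Fin D → Block} {χ : ℤ → Fin D} {d : ℤ → ℝ × ℝ × ℝ} {s : ℤ → ℤ}
    (h : IsConcat B χ d s) (j : ℤ) (k : ℕ) : s j + k ≤ s (j + k) := by
  induction k with
  | zero => simp
  | succ k ih =>
    have h1 := h.2.1 (j + k)
    have hlen : 1 ≤ ((B (χ (j + k))).1.length : ℤ) := by
      have h2 : 0 < (B (χ (j + k))).1.length := List.length_pos_iff.mpr (B (χ (j + k))).2.1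
      omega
    have e : j + ((k : ℤ) + 1) = (j + (k : ℤ)) + 1 := by ring
    push_cast
    rw [e, h1]
    push_cast at ih
    omega

lemma aux_concat_match {D : ℕ} (B : Fin D → Block)
    {χ1 χ2 : ℤ → Fin D} {d1 d2 : ℤ → ℝ × ℝ × ℝ} {s1 s2 : ℤ → ℤ}
    (h1 : IsConcat B χ1 d1 s1) (h2 : IsConcat B χ2 d2 s2)
    (j1 j2 : ℤ) (M : ℕ) (hw : ∀ k : ℕ, k < M → χ1 (j1 + k) = χ2 (j2 + k)) :
    s1 (j1 + M) - s1 j1 = s2 (j2 + M) - s2 j2 ∧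
      ∀ q : ℤ, s1 j1 ≤ q → q < s1 (j1 + M) → d1 q = d2 (s2 j2 + (q - s1 j1)) := by
  induction M with
  | zero =>
    refine ⟨by simp, ?_⟩
    intro q hq hq'
    simp only [Nat.cast_zero, add_zero] at hq'
    omega
  | succ M ih =>
    obtain ⟨hL, hD⟩ := ih (fun k hk => hw k (by omega))
    have hblock : χ1 (j1 + M) = χ2 (j2 + M) := hw M (by omega)
    have e1 : j1 + ((M : ℤ) + 1) = (j1 + (M : ℤ)) + 1 := by ring
    have e2 : j2 + ((M : ℤ) + 1) = (j2 + (M : ℤ)) + 1 := by ring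
    have hs1 : s1 (j1 + ((M : ℕ) + 1 : ℕ)) = s1 (j1 + M) + ((B (χ1 (j1 + M))).1.length : ℤ) := by
      push_cast
      rw [e1]
      exact h1.2.1 _
    have hs2 : s2 (j2 + ((M : ℕ) + 1 : ℕ)) = s2 (j2 + M) + ((B (χ1 (j1 + M))).1.length : ℤ) := by
      push_cast
      rw [e2, hblock]
      exact h2.2.1 _
    refine ⟨by rw [hs1, hs2]; omega, ?_⟩
    intro q hq hq'
    rw [hs1] at hq'
    by_cases hc : q < s1 (j1 + M)
    · exact hD q hq hc
    · push_neg at hc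
      have hk0 : 0 ≤ q - s1 (j1 + M) := by omega
      set k : ℕ := (q - s1 (j1 + M)).toNat with hkdef
      have hkq : q = s1 (j1 + M) + (k : ℤ) := by omega
      have hklen : k < (B (χ1 (j1 + M))).1.length := by omega
      have hd1 := h1.2.2 (j1 + M) k hklen
      have hklen2 : k < (B (χ2 (j2 + M))).1.length := by rw [← hblock]; exact hklen
      have hd2 := h2.2.2 (j2 + M) k hklen2
      have harg : s2 j2 + (s1 (j1 + (M:ℕ)) + (k : ℤ) - s1 j1) = s2 (j2 + M) + (k : ℤ) := by omega
      rw [hkq, hd1, harg, hd2]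
      congr 1
      · rw [hblock]
      · exact (Fin.heq_ext_iff (by rw [hblock])).mpr rfl

end AuxConcat
section AuxWindow

lemma aux_window_plus {D : ℕ} (B : Fin D → Block) (χp : ℕ → Fin D) (hχp : PseudoErgodicN χp)
    {data : ℤ → ℝ × ℝ × ℝ} {st : ℤ → ℤ} (hconcat : IsConcat B (reflDouble χp) data st)
    {χ' : ℤ → Fin D} {data' : ℤ → ℝ × ℝ × ℝ} {st' : ℤ → ℤ} (hconcat' : IsConcat B χ' data' st')
    (N : ℕ) :
    ∃ t : ℤ, (N:ℤ) + 2 ≤ t ∧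
      ∀ p : ℤ, -(N:ℤ) - 2 ≤ p → p ≤ (N:ℤ) + 2 → data (p + t) = data' p := by
  set M : ℕ := 2*N + 7 with hM
  set j₀ : ℤ := -((N:ℤ) + 2) with hj₀
  obtain ⟨j, hj⟩ := hχp M (by omega) (fun k => χ' (j₀ + ((k : ℕ) : ℤ)))
  have hw : ∀ k : ℕ, k < M → reflDouble χp ((j:ℤ) + k) = χ' (j₀ + k) := by
    intro k hk
    have hge : (0:ℤ) ≤ (j:ℤ) + k := by positivity
    simp only [reflDouble, if_pos hge]
    rw [show ((j:ℤ) + k).toNat = j + k from by omega]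
    exact hj ⟨k, hk⟩
  obtain ⟨hL, hD⟩ := aux_concat_match B hconcat hconcat' (j:ℤ) j₀ M hw
  set t : ℤ := st (j:ℤ) - st' j₀ with htdef
  have hst0 : st 0 = 0 := hconcat.1
  have hst0' : st' 0 = 0 := hconcat'.1
  have hstj : 0 ≤ st (j:ℤ) := by
    have h := aux_st_le hconcat 0 j
    rw [zero_add, hst0, zero_add] at h
    have : (0:ℤ) ≤ (j:ℤ) := by positivity
    omega
  have hstj₀ : st' j₀ ≤ -((N:ℤ)+2) := by
    have h := aux_st_le hconcat' j₀ (N+2)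
    have e : j₀ + (((N:ℕ)+2 : ℕ) : ℤ) = 0 := by push_cast; omega
    rw [e, hst0'] at h
    push_cast at h ⊢
    omega
  have hstj₁ : ((N:ℤ)+5) ≤ st' (j₀ + M) := by
    have h := aux_st_le hconcat' 0 (N+5)
    rw [hst0', zero_add] at h
    have e : (((N+5 : ℕ)) : ℤ) = j₀ + (M:ℤ) := by rw [hj₀, hM]; push_cast; ring
    rw [e] at h
    push_cast at h ⊢
    omega
  refine ⟨t, by omega, ?_⟩
  intro p hp1 hp2
  have h1 : st (j:ℤ) ≤ p + t := by omega
  have h2 : p + t < st ((j:ℤ) + M) := by omega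
  have h := hD (p + t) h1 h2
  rw [h]
  congr 1
  omega

lemma aux_window_minus {D : ℕ} (B : Fin D → Block) (χp : ℕ → Fin D) (hχp : PseudoErgodicN χp)
    {data : ℤ → ℝ × ℝ × ℝ} {st : ℤ → ℤ} (hconcat : IsConcat B (reflDouble χp) data st)
    {χ' : ℤ → Fin D} {data' : ℤ → ℝ × ℝ × ℝ} {st' : ℤ → ℤ} (hconcat' : IsConcat B χ' data' st')
    (N : ℕ) :
    ∃ t : ℤ, t ≤ -(N:ℤ) - 3 ∧
      ∀ p : ℤ, -(N:ℤ) - 2 ≤ p → p ≤ (N:ℤ) + 2 → data (p + t) = data' p := by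
  set M : ℕ := 2*N + 7 with hM
  set j₀ : ℤ := -((N:ℤ) + 2) with hj₀
  obtain ⟨m, hm⟩ := hχp M (by omega) (fun r => χ' (j₀ + (((M - 1 - (r : ℕ) : ℕ)) : ℤ)))
  set jneg : ℤ := -(m:ℤ) - M with hjneg
  have hw : ∀ k : ℕ, k < M → reflDouble χp (jneg + k) = χ' (j₀ + k) := by
    intro k hk
    have hlt : ¬ ((0:ℤ) ≤ jneg + k) := by omega
    simp only [reflDouble, if_neg hlt]
    rw [show (-(jneg + k) - 1).toNat = m + (M - 1 - k) from by omega]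
    have h' : χp (m + (M - 1 - k)) = χ' (j₀ + (((M - 1 - (M - 1 - k) : ℕ)) : ℤ)) :=
      hm ⟨M - 1 - k, by omega⟩
    rw [show M - 1 - (M - 1 - k) = k from by omega] at h'
    exact h'
  obtain ⟨hL, hD⟩ := aux_concat_match B hconcat hconcat' jneg j₀ M hw
  set t : ℤ := st jneg - st' j₀ with htdef
  have hst0 : st 0 = 0 := hconcat.1
  have hst0' : st' 0 = 0 := hconcat'.1
  have hjm : jneg + (M:ℤ) = -(m:ℤ) := by omega
  have hstj₀ : st' j₀ ≤ -((N:ℤ)+2) := by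
    have h := aux_st_le hconcat' j₀ (N+2)
    have e : j₀ + (((N:ℕ)+2 : ℕ) : ℤ) = 0 := by push_cast; omega
    rw [e, hst0'] at h
    push_cast at h ⊢
    omega
  have hstm : st (jneg + (M:ℤ)) ≤ 0 := by
    rw [hjm]
    have h := aux_st_le hconcat (-(m:ℤ)) m
    have e : -(m:ℤ) + ((m:ℕ) : ℤ) = 0 := by push_cast; ring
    rw [e, hst0] at h
    have : (0:ℤ) ≤ (m:ℤ) := by positivity
    omega
  have hstj₁ : ((N:ℤ)+5) ≤ st' (j₀ + M) := by
    have h := aux_st_le hconcat' 0 (N+5)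
    rw [hst0', zero_add] at h
    have e : (((N+5 : ℕ)) : ℤ) = j₀ + (M:ℤ) := by rw [hj₀, hM]; push_cast; ring
    rw [e] at h
    push_cast at h ⊢
    omega
  refine ⟨t, by omega, ?_⟩
  intro p hp1 hp2
  have h1 : st jneg ≤ p + t := by omega
  have h2 : p + t < st (jneg + M) := by omega
  have h := hD (p + t) h1 h2
  rw [h]
  congr 1
  omega

end AuxWindow
section AuxTransfer

lemma aux_aSeq_eq (d d' : ℤ → ℝ × ℝ × ℝ) (p t : ℤ)
    (h1 : d (p + t) = d' p) (h2 : d (p + 1 + t) = d' (p + 1)) :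
    aSeq d (p + t) = aSeq d' p := by
  unfold aSeq
  rw [show p + t + 1 = p + 1 + t from by ring, h1, h2]

lemma aux_bSeq_eq (d d' : ℤ → ℝ × ℝ × ℝ) (p t : ℤ)
    (h1 : d (p + t) = d' p) (h0 : d (p - 1 + t) = d' (p - 1)) :
    bSeq d (p + t) = bSeq d' p := by
  unfold bSeq
  rw [show p + t - 1 = p - 1 + t from by ring, h1, h0]

lemma aux_transfer_plus
    (data data' : ℤ → ℝ × ℝ × ℝ) (Jp : Hnat →L[ℝ] Hnat) (hJp : IsJacobiPlusOf data Jp)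
    (J' : Hint →L[ℝ] Hint) (hJ' : IsJacobiOf data' J') (lam : ℝ)
    (N : ℕ) (t : ℤ) (ht : (N:ℤ) + 2 ≤ t)
    (hdata : ∀ p : ℤ, -(N:ℤ) - 2 ≤ p → p ≤ (N:ℤ) + 2 → data (p + t) = data' p)
    (x : Hint) (hx : ∀ q : ℤ, q < -(N:ℤ) ∨ (N:ℤ) < q → x q = 0) :
    ∃ y : Hnat, ‖y‖ = ‖x‖ ∧
      ‖(algebraMap ℝ (Hnat →L[ℝ] Hnat) lam - Jp) y‖
        = ‖(algebraMap ℝ (Hint →L[ℝ] Hint) lam - J') x‖ := by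
  have hinj : Function.Injective (fun n : ℕ => (n:ℤ) - t) := by
    intro a b hab
    simp only at hab
    omega
  have hmem : Memℓp (fun n : ℕ => (x ((n:ℤ) - t) : ℝ)) 2 := by
    refine Memℓp.of_exponent_ge (memℓp_zero ?_) (by norm_num)
    have hsub : {n : ℕ | x ((n:ℤ) - t) ≠ 0} ⊆ (fun n : ℕ => (n:ℤ) - t) ⁻¹' (Set.Icc (-(N:ℤ)) N) := by
      intro n hn
      simp only [Set.mem_preimage, Set.mem_Icc]
      by_contra hcon
      exact hn (hx _ (by omega))
    exact Set.Finite.subset (Set.Finite.preimage hinj.injOn (Set.finite_Icc _ _)) hsub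
  set y : Hnat := ⟨fun n : ℕ => x ((n:ℤ) - t), hmem⟩ with hydef
  have hyc : ∀ n : ℕ, y n = x ((n:ℤ) - t) := fun n => rfl
  have hUx : ∀ q : ℤ, ((algebraMap ℝ (Hint →L[ℝ] Hint) lam - J') x) q
      = lam * x q - (aSeq data' (q-1) * x (q-1) + bSeq data' q * x q + aSeq data' q * x (q+1)) := by
    intro q
    rw [aux_resolvent_apply, hJ' x q]
  have hrange : ∀ q : ℤ, q ∉ Set.range (fun n : ℕ => (n:ℤ) - t) → q + t < 0 := by
    intro q hq
    by_contra hcon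
    push_neg at hcon
    exact hq ⟨(q + t).toNat, show ((((q + t).toNat : ℕ)) : ℤ) - t = q from by omega⟩
  have hrow : ∀ n : ℕ, ((algebraMap ℝ (Hnat →L[ℝ] Hnat) lam - Jp) y) n
      = ((algebraMap ℝ (Hint →L[ℝ] Hint) lam - J') x) ((n:ℤ) - t) := by
    intro n
    cases n with
    | zero =>
      rw [aux_resolvent_apply, hUx, hJp.1 y, hyc 0, hyc 1]
      push_cast
      rw [hx (0 - t) (Or.inl (by omega)), hx (1 - t) (Or.inl (by omega)),
        hx (0 - t - 1) (Or.inl (by omega)), hx (0 - t + 1) (Or.inl (by omega))]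
      ring
    | succ n =>
      rw [aux_resolvent_apply, hUx, hJp.2 y n, hyc n, hyc (n+1), hyc (n+2)]
      push_cast
      rw [show (n:ℤ) - t = (n:ℤ) + 1 - t - 1 from by ring,
        show (n:ℤ) + 1 + 1 - t = (n:ℤ) + 1 - t + 1 from by ring]
      set q : ℤ := (n:ℤ) + 1 - t with hqdef
      clear_value q
      by_cases hlow : q < -(N:ℤ) - 1
      · rw [hx (q - 1) (Or.inl (by omega)), hx q (Or.inl (by omega)),
          hx (q + 1) (Or.inl (by omega))]
        ring
      · by_cases hhigh : (N:ℤ) + 1 < q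
        · rw [hx (q - 1) (Or.inr (by omega)), hx q (Or.inr (by omega)),
            hx (q + 1) (Or.inr (by omega))]
          ring
        · push_neg at hlow hhigh
          have hA : data (q - 1 + t) = data' (q - 1) := hdata (q-1) (by omega) (by omega)
          have hB : data (q + t) = data' q := hdata q (by omega) (by omega)
          have hC : data (q + 1 + t) = data' (q + 1) := hdata (q+1) (by omega) (by omega)
          have hB' : data (q - 1 + 1 + t) = data' (q - 1 + 1) := by
            rw [show q - 1 + 1 = q from by ring]
            exact hB
          rw [show ((n:ℕ):ℤ) + 1 = q + t from by omega]
          rw [show ((n:ℕ):ℤ) = q - 1 + t from by omega]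
          rw [aux_aSeq_eq data data' (q-1) t hA hB', aux_bSeq_eq data data' q t hB hA,
            aux_aSeq_eq data data' q t hB hC]
  refine ⟨y, ?_, ?_⟩
  · refine aux_norm_eq y x (fun n : ℕ => (n:ℤ) - t) hinj hyc ?_
    intro q hq
    exact hx q (Or.inl (by have := hrange q hq; omega))
  · refine aux_norm_eq _ _ (fun n : ℕ => (n:ℤ) - t) hinj hrow ?_
    intro q hq
    have hqt := hrange q hq
    rw [hUx q, hx q (Or.inl (by omega)), hx (q-1) (Or.inl (by omega)),
      hx (q+1) (Or.inl (by omega))]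
    ring

lemma aux_transfer_minus
    (data data' : ℤ → ℝ × ℝ × ℝ) (Jm : Hneg →L[ℝ] Hneg) (hJm : IsJacobiMinusOf data Jm)
    (J' : Hint →L[ℝ] Hint) (hJ' : IsJacobiOf data' J') (lam : ℝ)
    (N : ℕ) (t : ℤ) (ht : t ≤ -(N:ℤ) - 3)
    (hdata : ∀ p : ℤ, -(N:ℤ) - 2 ≤ p → p ≤ (N:ℤ) + 2 → data (p + t) = data' p)
    (x : Hint) (hx : ∀ q : ℤ, q < -(N:ℤ) ∨ (N:ℤ) < q → x q = 0) :
    ∃ y : Hneg, ‖y‖ = ‖x‖ ∧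
      ‖(algebraMap ℝ (Hneg →L[ℝ] Hneg) lam - Jm) y‖
        = ‖(algebraMap ℝ (Hint →L[ℝ] Hint) lam - J') x‖ := by
  have hinj : Function.Injective (fun i : {i : ℤ // i < 0} => (i : ℤ) - t) := by
    intro a b hab
    simp only at hab
    exact Subtype.ext (by omega)
  have hmem : Memℓp (fun i : {i : ℤ // i < 0} => (x ((i : ℤ) - t) : ℝ)) 2 := by
    refine Memℓp.of_exponent_ge (memℓp_zero ?_) (by norm_num)
    have hsub : {i : {i : ℤ // i < 0} | x ((i : ℤ) - t) ≠ 0}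
        ⊆ (fun i : {i : ℤ // i < 0} => (i : ℤ) - t) ⁻¹' (Set.Icc (-(N:ℤ)) N) := by
      intro i hi
      simp only [Set.mem_preimage, Set.mem_Icc]
      by_contra hcon
      exact hi (hx _ (by omega))
    exact Set.Finite.subset (Set.Finite.preimage hinj.injOn (Set.finite_Icc _ _)) hsub
  set y : Hneg := ⟨fun i : {i : ℤ // i < 0} => x ((i : ℤ) - t), hmem⟩ with hydef
  have hyc : ∀ i : {i : ℤ // i < 0}, y i = x ((i : ℤ) - t) := fun i => rfl
  have hUx : ∀ q : ℤ, ((algebraMap ℝ (Hint →L[ℝ] Hint) lam - J') x) q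
      = lam * x q - (aSeq data' (q-1) * x (q-1) + bSeq data' q * x q + aSeq data' q * x (q+1)) := by
    intro q
    rw [aux_resolvent_apply, hJ' x q]
  have hrange : ∀ q : ℤ, q ∉ Set.range (fun i : {i : ℤ // i < 0} => (i : ℤ) - t) → 0 ≤ q + t := by
    intro q hq
    by_contra hcon
    push_neg at hcon
    exact hq ⟨⟨q + t, hcon⟩, show (q + t) - t = q from by ring⟩
  have hrow : ∀ i : {i : ℤ // i < 0}, ((algebraMap ℝ (Hneg →L[ℝ] Hneg) lam - Jm) y) i
      = ((algebraMap ℝ (Hint →L[ℝ] Hint) lam - J') x) ((i : ℤ) - t) := by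
    rintro ⟨i, hi⟩
    by_cases hone : i = -1
    · subst hone
      rw [aux_resolvent_apply, hUx]
      rw [hJm.1 y, hyc ⟨-1, by norm_num⟩, hyc ⟨-2, by norm_num⟩]
      rw [hx ((-1 : ℤ) - t) (Or.inr (by omega)), hx ((-2 : ℤ) - t) (Or.inr (by omega)),
        hx ((-1 : ℤ) - t - 1) (Or.inr (by omega)), hx ((-1 : ℤ) - t + 1) (Or.inr (by omega))]
      ring
    · have hilt : i < -1 := by omega
      rw [aux_resolvent_apply, hUx]
      rw [hJm.2 y i hilt, hyc ⟨i - 1, by omega⟩, hyc ⟨i, by omega⟩, hyc ⟨i + 1, by omega⟩]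
      rw [show i - 1 - t = i - t - 1 from by ring, show i + 1 - t = i - t + 1 from by ring]
      set q : ℤ := i - t with hqdef
      clear_value q
      by_cases hlow : q < -(N:ℤ) - 1
      · rw [hx (q - 1) (Or.inl (by omega)), hx q (Or.inl (by omega)),
          hx (q + 1) (Or.inl (by omega))]
        ring
      · by_cases hhigh : (N:ℤ) + 1 < q
        · rw [hx (q - 1) (Or.inr (by omega)), hx q (Or.inr (by omega)),
            hx (q + 1) (Or.inr (by omega))]
          ring
        · push_neg at hlow hhigh
          have hA : data (q - 1 + t) = data' (q - 1) := hdata (q-1) (by omega) (by omega)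
          have hB : data (q + t) = data' q := hdata q (by omega) (by omega)
          have hC : data (q + 1 + t) = data' (q + 1) := hdata (q+1) (by omega) (by omega)
          have hB' : data (q - 1 + 1 + t) = data' (q - 1 + 1) := by
            rw [show q - 1 + 1 = q from by ring]
            exact hB
          have hi1 : aSeq data (i - 1) = aSeq data' (q - 1) := by
            rw [show i - 1 = q - 1 + t from by omega]
            exact aux_aSeq_eq data data' (q-1) t hA hB'
          have hi2 : bSeq data i = bSeq data' q := by
            rw [show i = q + t from by omega]
            exact aux_bSeq_eq data data' q t hB hA
          have hi3 : aSeq data i = aSeq data' q := by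
            rw [show i = q + t from by omega]
            exact aux_aSeq_eq data data' q t hB hC
          rw [hi1, hi2, hi3]
  refine ⟨y, ?_, ?_⟩
  · refine aux_norm_eq y x (fun i : {i : ℤ // i < 0} => (i : ℤ) - t) hinj hyc ?_
    intro q hq
    exact hx q (Or.inr (by have := hrange q hq; omega))
  · refine aux_norm_eq _ _ (fun i : {i : ℤ // i < 0} => (i : ℤ) - t) hinj hrow ?_
    intro q hq
    have hqt := hrange q hq
    rw [hUx q, hx q (Or.inr (by omega)), hx (q-1) (Or.inr (by omega)),
      hx (q+1) (Or.inr (by omega))]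
    ring

end AuxTransfer
theorem stmt_11 (D : ℕ) (B : Fin D → Block)
    (χp : ℕ → Fin D) (hχp : PseudoErgodicN χp)
    (data : ℤ → ℝ × ℝ × ℝ) (st : ℤ → ℤ)
    (hconcat : IsConcat B (reflDouble χp) data st)
    (Jp : Hnat →L[ℝ] Hnat) (hJp : IsJacobiPlusOf data Jp)
    (Jm : Hneg →L[ℝ] Hneg) (hJm : IsJacobiMinusOf data Jm)
    (χ' : ℤ → Fin D) (data' : ℤ → ℝ × ℝ × ℝ) (st' : ℤ → ℤ)
    (hconcat' : IsConcat B χ' data' st')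
    (J' : Hint →L[ℝ] Hint) (hJ' : IsJacobiOf data' J') :
    spectrum ℝ J' ⊆ spectrum ℝ Jp ∧ spectrum ℝ J' ⊆ spectrum ℝ Jm := by
  have hsym : ∀ x y : Hint, ⟪J' x, y⟫ = ⟪x, J' y⟫ := aux_sym data' J' hJ'
  have hbase : ∀ (F : Finset ℤ) (x : Hint) (q : ℤ),
      (q < -((F.sup fun i => i.natAbs : ℕ):ℤ) ∨ ((F.sup fun i => i.natAbs : ℕ):ℤ) < q) →
      (∑ i ∈ F, lp.single 2 i (x i) : Hint) q = 0 := by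
    intro F x q hq
    rw [aux_fsup_apply]
    have hnot : q ∉ F := by
      intro hmem
      have h1 : q.natAbs ≤ F.sup fun i => i.natAbs :=
        Finset.le_sup (f := fun i : ℤ => i.natAbs) hmem
      omega
    simp [hnot]
  constructor
  · intro lam hlam
    by_contra hnot
    rw [spectrum.notMem_iff] at hnot
    obtain ⟨u, hu⟩ := hnot
    have hVb : ∀ y : Hnat, ‖y‖ ≤ ‖(↑u⁻¹ : Hnat →L[ℝ] Hnat)‖
        * ‖(algebraMap ℝ (Hnat →L[ℝ] Hnat) lam - Jp) y‖ := by
      intro y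
      have h1 : y = (↑u⁻¹ : Hnat →L[ℝ] Hnat) ((algebraMap ℝ (Hnat →L[ℝ] Hnat) lam - Jp) y) := by
        rw [← hu]
        calc y = ((1 : Hnat →L[ℝ] Hnat)) y := rfl
          _ = ((↑u⁻¹ * ↑u : Hnat →L[ℝ] Hnat)) y := by rw [Units.inv_mul]
          _ = (↑u⁻¹ : Hnat →L[ℝ] Hnat) ((↑u : Hnat →L[ℝ] Hnat) y) := rfl
      conv_lhs => rw [h1]
      exact ContinuousLinearMap.le_opNorm _ _
    set c : ℝ := ‖(↑u⁻¹ : Hnat →L[ℝ] Hnat)‖ + 1 with hc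
    have hcpos : 0 < c := by positivity
    have hfin : ∀ (x : Hint) (F : Finset ℤ),
        ‖(∑ i ∈ F, lp.single 2 i (x i) : Hint)‖
          ≤ c * ‖(algebraMap ℝ (Hint →L[ℝ] Hint) lam - J')
              (∑ i ∈ F, lp.single 2 i (x i))‖ := by
      intro x F
      obtain ⟨t, ht, hdata⟩ := aux_window_plus B χp hχp hconcat hconcat'
        (F.sup fun i => i.natAbs)
      obtain ⟨y, hy1, hy2⟩ := aux_transfer_plus data data' Jp hJp J' hJ' lam
        (F.sup fun i => i.natAbs) t ht hdata
        (∑ i ∈ F, lp.single 2 i (x i)) (hbase F x)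
      calc ‖(∑ i ∈ F, lp.single 2 i (x i) : Hint)‖ = ‖y‖ := hy1.symm
        _ ≤ ‖(↑u⁻¹ : Hnat →L[ℝ] Hnat)‖
            * ‖(algebraMap ℝ (Hnat →L[ℝ] Hnat) lam - Jp) y‖ := hVb y
        _ ≤ c * ‖(algebraMap ℝ (Hnat →L[ℝ] Hnat) lam - Jp) y‖ := by
            apply mul_le_mul_of_nonneg_right _ (norm_nonneg _)
            rw [hc]
            linarith
        _ = c * ‖(algebraMap ℝ (Hint →L[ℝ] Hint) lam - J')
            (∑ i ∈ F, lp.single 2 i (x i))‖ := by rw [hy2]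
    have hbb : ∀ x : Hint, ‖x‖ ≤ c * ‖(algebraMap ℝ (Hint →L[ℝ] Hint) lam - J') x‖ :=
      fun x => aux_dense_bound _ (fun z F => hfin z F) x
    exact (spectrum.mem_iff.mp hlam)
      (aux_isUnit _ (aux_resolvent_sym J' hsym lam) hcpos hbb)
  · intro lam hlam
    by_contra hnot
    rw [spectrum.notMem_iff] at hnot
    obtain ⟨u, hu⟩ := hnot
    have hVb : ∀ y : Hneg, ‖y‖ ≤ ‖(↑u⁻¹ : Hneg →L[ℝ] Hneg)‖
        * ‖(algebraMap ℝ (Hneg →L[ℝ] Hneg) lam - Jm) y‖ := by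
      intro y
      have h1 : y = (↑u⁻¹ : Hneg →L[ℝ] Hneg) ((algebraMap ℝ (Hneg →L[ℝ] Hneg) lam - Jm) y) := by
        rw [← hu]
        calc y = ((1 : Hneg →L[ℝ] Hneg)) y := rfl
          _ = ((↑u⁻¹ * ↑u : Hneg →L[ℝ] Hneg)) y := by rw [Units.inv_mul]
          _ = (↑u⁻¹ : Hneg →L[ℝ] Hneg) ((↑u : Hneg →L[ℝ] Hneg) y) := rfl
      conv_lhs => rw [h1]
      exact ContinuousLinearMap.le_opNorm _ _
    set c : ℝ := ‖(↑u⁻¹ : Hneg →L[ℝ] Hneg)‖ + 1 with hc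
    have hcpos : 0 < c := by positivity
    have hfin : ∀ (x : Hint) (F : Finset ℤ),
        ‖(∑ i ∈ F, lp.single 2 i (x i) : Hint)‖
          ≤ c * ‖(algebraMap ℝ (Hint →L[ℝ] Hint) lam - J')
              (∑ i ∈ F, lp.single 2 i (x i))‖ := by
      intro x F
      obtain ⟨t, ht, hdata⟩ := aux_window_minus B χp hχp hconcat hconcat'
        (F.sup fun i => i.natAbs)
      obtain ⟨y, hy1, hy2⟩ := aux_transfer_minus data data' Jm hJm J' hJ' lam
        (F.sup fun i => i.natAbs) t ht hdata
        (∑ i ∈ F, lp.single 2 i (x i)) (hbase F x)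
      calc ‖(∑ i ∈ F, lp.single 2 i (x i) : Hint)‖ = ‖y‖ := hy1.symm
        _ ≤ ‖(↑u⁻¹ : Hneg →L[ℝ] Hneg)‖
            * ‖(algebraMap ℝ (Hneg →L[ℝ] Hneg) lam - Jm) y‖ := hVb y
        _ ≤ c * ‖(algebraMap ℝ (Hneg →L[ℝ] Hneg) lam - Jm) y‖ := by
            apply mul_le_mul_of_nonneg_right _ (norm_nonneg _)
            rw [hc]
            linarith
        _ = c * ‖(algebraMap ℝ (Hint →L[ℝ] Hint) lam - J')
            (∑ i ∈ F, lp.single 2 i (x i))‖ := by rw [hy2]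
    have hbb : ∀ x : Hint, ‖x‖ ≤ c * ‖(algebraMap ℝ (Hint →L[ℝ] Hint) lam - J') x‖ :=
      fun x => aux_dense_bound _ (fun z F => hfin z F) x
    exact (spectrum.mem_iff.mp hlam)
      (aux_isUnit _ (aux_resolvent_sym J' hsym lam) hcpos hbb)
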